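/- Let q ≥ 1, let Σ be a symmetric positive definite q×q real matrix, let 0 < a < q/2 and b > 0, and let x ∈ ℝ^q with x ≠ 0. Then p_eg(x; Σ, a, b) = ∫_{2/b}^∞ [Γ(q/2) / (Γ(q/2 − a) Γ(a))] · ((t − 2/b)^(q/2 − a − 1) · 2^a) / (t^(q/2) · b^a) · (2π)^(−q/2) · det(t⁻¹·Σ)^(−1/2) · exp(−(t/2)·xᵀΣ⁻¹x) dt; that is, the elliptical gamma density is a scale mixture of centered Gaussian densities. -/

import Mathlib

open Matrix Classical

/-- Principal (symmetric positive semidefinite) square root of a matrix;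
junk value `0` if the matrix is not positive semidefinite. -/
noncomputable def matSqrt {q : ℕ} (A : Matrix (Fin q) (Fin q) ℝ) : Matrix (Fin q) (Fin q) ℝ :=
  if h : A.PosSemidef then h.1.eigenvectorUnitary.1 * diagonal (Real.sqrt ∘ h.1.eigenvalues) *
    (star h.1.eigenvectorUnitary : Matrix (Fin q) (Fin q) ℝ) else 0

/-- Loewner order: `loewnerLE A B` iff `B - A` is positive semidefinite. -/
def loewnerLE {q : ℕ} (A B : Matrix (Fin q) (Fin q) ℝ) : Prop := (B - A).PosSemidef

/-- Largest eigenvalue of a (Hermitian) matrix; junk value `0` otherwise. -/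
noncomputable def maxEig {q : ℕ} (A : Matrix (Fin q) (Fin q) ℝ) : ℝ :=
  if h : A.IsHermitian then ⨆ i, h.eigenvalues i else 0

/-- Smallest eigenvalue of a (Hermitian) matrix; junk value `0` otherwise. -/
noncomputable def minEig {q : ℕ} (A : Matrix (Fin q) (Fin q) ℝ) : ℝ :=
  if h : A.IsHermitian then ⨅ i, h.eigenvalues i else 0

/-- The elliptical gamma density
`p_eg(x; Σ, a, b) = Γ(q/2) / (π^(q/2) Γ(a) b^a det(Σ)^(1/2)) (xᵀΣ⁻¹x)^(a-q/2) exp(-xᵀΣ⁻¹x/b)`. -/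
noncomputable def pEG {q : ℕ} (S : Matrix (Fin q) (Fin q) ℝ) (a b : ℝ) (x : Fin q → ℝ) : ℝ :=
  Real.Gamma ((q : ℝ) / 2) /
    (Real.pi ^ ((q : ℝ) / 2) * Real.Gamma a * b ^ a * S.det ^ ((1 : ℝ) / 2)) *
    (x ⬝ᵥ S⁻¹ *ᵥ x) ^ (a - (q : ℝ) / 2) * Real.exp (-(x ⬝ᵥ S⁻¹ *ᵥ x) / b)

lemma integral_Ioi_shift (c : ℝ) (f : ℝ → ℝ) :
    ∫ t in Set.Ioi c, f t = ∫ s in Set.Ioi (0:ℝ), f (s + c) := by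
  rw [← MeasureTheory.integral_indicator measurableSet_Ioi,
    ← MeasureTheory.integral_indicator measurableSet_Ioi,
    ← MeasureTheory.integral_add_right_eq_self (fun t => (Set.Ioi c).indicator f t) c]
  congr 1
  ext s
  have h1 : s + c ∈ Set.Ioi c ↔ s ∈ Set.Ioi (0:ℝ) := by
    simp only [Set.mem_Ioi]; constructor <;> intro <;> linarith
  simp only [Set.indicator_apply, h1]

set_option maxHeartbeats 1000000 in
/-- For `0 < a < q/2`, the elliptical gamma density is a (continuous) scale mixture of
centered Gaussian densities with covariances `t⁻¹·Σ`, `t ∈ (2/b, ∞)`. -/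
theorem pEG_eq_scale_mixture_of_gaussians {q : ℕ} (hq : 1 ≤ q)
    {S : Matrix (Fin q) (Fin q) ℝ} (hS : S.PosDef)
    {a b : ℝ} (ha : 0 < a) (haq : a < (q : ℝ) / 2) (hb : 0 < b)
    (x : Fin q → ℝ) (hx : x ≠ 0) :
    pEG S a b x = ∫ t in Set.Ioi (2 / b),
      Real.Gamma ((q : ℝ) / 2) / (Real.Gamma ((q : ℝ) / 2 - a) * Real.Gamma a) *
        ((t - 2 / b) ^ ((q : ℝ) / 2 - a - 1) * 2 ^ a) / (t ^ ((q : ℝ) / 2) * b ^ a) *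
        ((2 * Real.pi) ^ (-(q : ℝ) / 2) * (Matrix.det (t⁻¹ • S)) ^ (-(1 : ℝ) / 2) *
          Real.exp (-(t / 2) * (x ⬝ᵥ S⁻¹ *ᵥ x))) := by
  have hrpos : 0 < x ⬝ᵥ S⁻¹ *ᵥ x := by
    have := hS.inv.dotProduct_mulVec_pos hx
    simpa using this
  set r : ℝ := x ⬝ᵥ S⁻¹ *ᵥ x with hr
  have hD : 0 < S.det := hS.det_pos
  set c : ℝ := 2 / b with hc
  have hcpos : 0 < c := by positivity
  have hppos : 0 < (q : ℝ) / 2 - a := by linarith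
  set p : ℝ := (q : ℝ) / 2 - a with hp
  set C : ℝ := Real.Gamma ((q : ℝ) / 2) / (Real.Gamma p * Real.Gamma a) * 2 ^ a / b ^ a *
      (2 * Real.pi) ^ (-(q : ℝ) / 2) * S.det ^ (-(1 : ℝ) / 2) with hC
  have step1 : ∫ t in Set.Ioi c,
      Real.Gamma ((q : ℝ) / 2) / (Real.Gamma p * Real.Gamma a) *
        ((t - c) ^ (p - 1) * 2 ^ a) / (t ^ ((q : ℝ) / 2) * b ^ a) *
        ((2 * Real.pi) ^ (-(q : ℝ) / 2) * (Matrix.det (t⁻¹ • S)) ^ (-(1 : ℝ) / 2) *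
          Real.exp (-(t / 2) * r))
      = ∫ t in Set.Ioi c, C * ((t - c) ^ (p - 1) * Real.exp (-(r / 2 * t))) := by
    apply MeasureTheory.setIntegral_congr_fun measurableSet_Ioi
    intro t ht
    dsimp only
    have htpos : 0 < t := lt_trans hcpos ht
    have hdetr : (Matrix.det (t⁻¹ • S)) ^ (-(1 : ℝ) / 2)
        = t ^ ((q : ℝ) / 2) * S.det ^ (-(1 : ℝ) / 2) := by
      rw [Matrix.det_smul, Fintype.card_fin, Real.mul_rpow (by positivity) hD.le]
      congr 1
      rw [← Real.rpow_natCast t⁻¹ q, Real.inv_rpow htpos.le, ← Real.rpow_neg htpos.le,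
        ← Real.rpow_mul htpos.le]
      congr 1
      push_cast
      ring
    rw [hdetr]
    have hexp : Real.exp (-(t / 2) * r) = Real.exp (-(r / 2 * t)) := by ring_nf
    rw [hexp, hC]
    have hT : t ^ ((q : ℝ) / 2) ≠ 0 := (Real.rpow_pos_of_pos htpos _).ne'
    generalize t ^ ((q : ℝ) / 2) = T at hT ⊢
    generalize (t - c) ^ (p - 1) = u
    field_simp
  rw [step1, MeasureTheory.integral_const_mul, integral_Ioi_shift c
    (fun t => (t - c) ^ (p - 1) * Real.exp (-(r / 2 * t)))]
  have step2 : ∫ s in Set.Ioi (0:ℝ), (s + c - c) ^ (p - 1) * Real.exp (-(r / 2 * (s + c)))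
      = (1 / (r / 2)) ^ p * Real.Gamma p * Real.exp (-(r / 2 * c)) := by
    have key : ∀ s : ℝ, (s + c - c) ^ (p - 1) * Real.exp (-(r / 2 * (s + c)))
        = (s ^ (p - 1) * Real.exp (-(r / 2 * s))) * Real.exp (-(r / 2 * c)) := by
      intro s
      rw [add_sub_cancel_right, show -(r / 2 * (s + c)) = -(r / 2 * s) + -(r / 2 * c) by ring,
        Real.exp_add, mul_assoc]
    simp_rw [key]
    rw [MeasureTheory.integral_mul_const, Real.integral_rpow_mul_exp_neg_mul_Ioi (by rw [hp]; linarith)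
      (by positivity)]
  rw [step2]
  have hrc : Real.exp (-(r / 2 * c)) = Real.exp (-r / b) := by
    congr 1; rw [hc]; field_simp
  have h2r : (1 / (r / 2)) = 2 / r := by field_simp
  rw [hrc, h2r, Real.div_rpow (by norm_num) hrpos.le, hp,
    Real.rpow_sub (by norm_num : (0:ℝ) < 2)]
  have hrexp : r ^ (a - (q : ℝ) / 2) = (r ^ ((q:ℝ)/2 - a))⁻¹ := by
    rw [show a - (q:ℝ)/2 = -((q:ℝ)/2 - a) by ring, Real.rpow_neg hrpos.le]
  have h2pi : (2 * Real.pi) ^ (-(q : ℝ) / 2)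
      = ((2:ℝ) ^ ((q:ℝ)/2))⁻¹ * (Real.pi ^ ((q:ℝ)/2))⁻¹ := by
    rw [show -(q:ℝ)/2 = -((q:ℝ)/2) by ring,
      Real.mul_rpow (by norm_num) Real.pi_pos.le,
      Real.rpow_neg (by norm_num), Real.rpow_neg Real.pi_pos.le]
  have hdetneg : S.det ^ (-(1 : ℝ) / 2) = (S.det ^ ((1:ℝ)/2))⁻¹ := by
    rw [show -(1:ℝ)/2 = -((1:ℝ)/2) by ring, Real.rpow_neg hD.le]
  rw [pEG, hC, ← hr, hrexp, h2pi, hdetneg]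
  have hGp : Real.Gamma p ≠ 0 := (Real.Gamma_pos_of_pos (by rw [hp]; linarith)).ne'
  have hGa : Real.Gamma a ≠ 0 := (Real.Gamma_pos_of_pos ha).ne'
  have hpi : Real.pi ^ ((q:ℝ)/2) ≠ 0 := (Real.rpow_pos_of_pos Real.pi_pos _).ne'
  have hba : b ^ a ≠ 0 := (Real.rpow_pos_of_pos hb _).ne'
  have hdh : S.det ^ ((1:ℝ)/2) ≠ 0 := (Real.rpow_pos_of_pos hD _).ne'
  have h2q : ((2:ℝ) ^ ((q:ℝ)/2)) ≠ 0 := (Real.rpow_pos_of_pos (by norm_num) _).ne'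
  have h2a : ((2:ℝ) ^ a) ≠ 0 := (Real.rpow_pos_of_pos (by norm_num : (0:ℝ) < 2) _).ne'
  have hrp : (r ^ ((q:ℝ)/2 - a)) ≠ 0 := (Real.rpow_pos_of_pos hrpos _).ne'
  rw [hp]
  generalize Real.Gamma ((q:ℝ)/2) = G1
  generalize Real.Gamma ((q:ℝ)/2 - a) = Gp at hGp ⊢
  generalize Real.Gamma a = Ga at hGa ⊢
  generalize Real.pi ^ ((q:ℝ)/2) = P at hpi ⊢
  generalize b ^ a = Ba at hba ⊢
  generalize S.det ^ ((1:ℝ)/2) = Dh at hdh ⊢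
  generalize ((2:ℝ) ^ ((q:ℝ)/2)) = T2 at h2q ⊢
  generalize ((2:ℝ) ^ a) = Ta at h2a ⊢
  generalize (r ^ ((q:ℝ)/2 - a)) = R at hrp ⊢
  generalize Real.exp (-r / b) = E
  field_simp
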